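/- If r(s) = s/√(tan²θ - s²) on an interval where |s| < tan θ, then the vector field d(s) = cos θ · (s·t(s) + n₁(s) + √(tan²θ - s²) · n₂(s)) along a unit-speed Frenet curve with curvature k ≡ 1 and torsion r is constant (d'(s) = 0), and ⟨d(s), n₁(s)⟩ = cos θ for all s. -/

import Mathlib

/-- If r(s) = s/√(tan²θ - s²) for |s| < tan θ, then along a unit-speed
Frenet curve with k ≡ 1 and torsion r the vector field
d(s) = cos θ · (s·t(s) + n₁(s) + √(tan²θ - s²)·n₂(s)) is constant (d' = 0) and
⟨d(s), n₁(s)⟩ = cos θ for all s. -/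
theorem stmt_2 (θ : ℝ) (hθ : θ ∈ Set.Ioo 0 (Real.pi / 2))
    (t n₁ n₂ : ℝ → EuclideanSpace ℝ (Fin 3)) (r : ℝ → ℝ)
    (hr : ∀ s, |s| < Real.tan θ → r s = s / Real.sqrt (Real.tan θ ^ 2 - s ^ 2))
    (ht : ∀ s, ‖t s‖ = 1) (hn₁ : ∀ s, ‖n₁ s‖ = 1) (hn₂ : ∀ s, ‖n₂ s‖ = 1)
    (htn₁ : ∀ s, inner ℝ (t s) (n₁ s) = (0 : ℝ))
    (htn₂ : ∀ s, inner ℝ (t s) (n₂ s) = (0 : ℝ))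
    (hn₁n₂ : ∀ s, inner ℝ (n₁ s) (n₂ s) = (0 : ℝ))
    (hFt : ∀ s, |s| < Real.tan θ → HasDerivAt t (n₁ s) s)
    (hFn₁ : ∀ s, |s| < Real.tan θ → HasDerivAt n₁ (-t s + r s • n₂ s) s)
    (hFn₂ : ∀ s, |s| < Real.tan θ → HasDerivAt n₂ (-(r s) • n₁ s) s)
    (d : ℝ → EuclideanSpace ℝ (Fin 3))
    (hd : ∀ s, d s = Real.cos θ •
      (s • t s + n₁ s + Real.sqrt (Real.tan θ ^ 2 - s ^ 2) • n₂ s)) :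
    ∀ s, |s| < Real.tan θ →
      HasDerivAt d 0 s ∧ inner ℝ (d s) (n₁ s) = Real.cos θ := by
  intro s hs
  have habs := abs_lt.mp hs
  have hsq : Real.tan θ ^ 2 - s ^ 2 > 0 := by
    have := sq_lt_sq' habs.1 habs.2
    linarith
  set u := Real.sqrt (Real.tan θ ^ 2 - s ^ 2) with hu_def
  have hu : 0 < u := Real.sqrt_pos.mpr hsq
  have hru : r s = s / u := hr s hs
  constructor
  · have hdfun : d = fun x => Real.cos θ •
        (x • t x + n₁ x + Real.sqrt (Real.tan θ ^ 2 - x ^ 2) • n₂ x) := funext hd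
    -- derivative of sqrt part
    have hpoly : HasDerivAt (fun x : ℝ => Real.tan θ ^ 2 - x ^ 2) (-(2 * s)) s := by
      simpa using (hasDerivAt_pow 2 s).const_sub (Real.tan θ ^ 2)
    have hsqrt : HasDerivAt (fun x : ℝ => Real.sqrt (Real.tan θ ^ 2 - x ^ 2))
        (-(2 * s) / (2 * u)) s := hpoly.sqrt (by positivity)
    have h1 : HasDerivAt (fun x : ℝ => x • t x) (s • n₁ s + (1 : ℝ) • t s) s :=
      (hasDerivAt_id s).smul (hFt s hs)
    have h3 : HasDerivAt (fun x : ℝ => Real.sqrt (Real.tan θ ^ 2 - x ^ 2) • n₂ x)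
        (u • (-(r s) • n₁ s) + (-(2 * s) / (2 * u)) • n₂ s) s :=
      hsqrt.smul (hFn₂ s hs)
    have hsum : HasDerivAt (fun x => x • t x + n₁ x + Real.sqrt (Real.tan θ ^ 2 - x ^ 2) • n₂ x)
        ((s • n₁ s + (1 : ℝ) • t s) + (-t s + r s • n₂ s)
          + (u • (-(r s) • n₁ s) + (-(2 * s) / (2 * u)) • n₂ s)) s :=
      (h1.add (hFn₁ s hs)).add h3
    have hD := hsum.const_smul (Real.cos θ)
    replace hD : HasDerivAt d (Real.cos θ • ((s • n₁ s + (1 : ℝ) • t s) + (-t s + r s • n₂ s)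
        + (u • (-(r s) • n₁ s) + (-(2 * s) / (2 * u)) • n₂ s))) s := by
      rw [hdfun]; exact hD
    convert hD using 1
    have hur : u * r s = s := by
      rw [hru]; field_simp
    have h2s : -(2 * s) / (2 * u) = -(r s) := by
      rw [hru]; field_simp
    rw [h2s]
    have : (s • n₁ s + (1 : ℝ) • t s) + (-t s + r s • n₂ s)
        + (u • (-(r s) • n₁ s) + (-(r s)) • n₂ s)
        = (s - u * r s) • n₁ s := by
      simp only [smul_smul]
      module
    rw [this, hur, sub_self, zero_smul, smul_zero]
  · rw [hd s]
    have hn₁self : inner ℝ (n₁ s) (n₁ s) = (1 : ℝ) := by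
      rw [real_inner_self_eq_norm_sq, hn₁ s]; norm_num
    have hn₂n₁ : inner ℝ (n₂ s) (n₁ s) = (0 : ℝ) := by
      rw [real_inner_comm]; exact hn₁n₂ s
    rw [real_inner_smul_left, inner_add_left, inner_add_left, real_inner_smul_left,
      real_inner_smul_left, htn₁ s, hn₁self, hn₂n₁]
    ring
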